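/- arXiv:1810.06974 — 4 statements merged into one kernel-verified Lean document; each statement's English description precedes it below -/
import Mathlib

section
/- Along solutions of the observer error dynamics initialized with x̃(0) = ỹ(0) = 0 and (Ṽx(0), Ṽy(0)) = (Vx, Vy) with Vx² + Vy² ≤ V_max², the current-estimation error satisfies ‖(Ṽx(t), Ṽy(t))‖ ≤ √(max(k_{x2},k_{y2})/min(k_{x2},k_{y2})) · V_max for all t ≥ 0. In particular, if k_{x2} = k_{y2} then ‖(Ṽx(t), Ṽy(t))‖ ≤ V_max for all t ≥ 0. -/
open Real

/-- With zero initial position errors and initial current errors equal to the true current,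
the current estimation error stays bounded by √(max/min of gains) · V_max. -/
theorem stmt_3 (kx1 kx2 ky1 ky2 Vx Vy Vmax : ℝ)
    (hkx1 : 0 < kx1) (hkx2 : 0 < kx2) (hky1 : 0 < ky1) (hky2 : 0 < ky2)
    (hV : Vx^2 + Vy^2 ≤ Vmax^2) (hVmax : 0 ≤ Vmax)
    (x y vx vy : ℝ → ℝ)
    (hx : ∀ t : ℝ, HasDerivAt x (-kx1 * x t + vx t) t)
    (hy : ∀ t : ℝ, HasDerivAt y (-ky1 * y t + vy t) t)
    (hvx : ∀ t : ℝ, HasDerivAt vx (-kx2 * x t) t)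
    (hvy : ∀ t : ℝ, HasDerivAt vy (-ky2 * y t) t)
    (hx0 : x 0 = 0) (hy0 : y 0 = 0) (hvx0 : vx 0 = Vx) (hvy0 : vy 0 = Vy) :
    (∀ t : ℝ, 0 ≤ t →
      Real.sqrt ((vx t)^2 + (vy t)^2) ≤
        Real.sqrt (max kx2 ky2 / min kx2 ky2) * Vmax) ∧
    (kx2 = ky2 → ∀ t : ℝ, 0 ≤ t →
      Real.sqrt ((vx t)^2 + (vy t)^2) ≤ Vmax) := by
  set W : ℝ → ℝ := fun t => (x t)^2 + (y t)^2 + (vx t)^2 / kx2 + (vy t)^2 / ky2 with hW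
  have hWderiv : ∀ t : ℝ, HasDerivAt W (-(2*kx1)*(x t)^2 + -(2*ky1)*(y t)^2) t := by
    intro t
    have h1 := (((hx t).pow 2).add ((hy t).pow 2)).add
      (((hvx t).pow 2).div_const kx2) |>.add (((hvy t).pow 2).div_const ky2)
    convert h1 using 1
    · rfl
    · rfl
    · rfl
    field_simp
    ring
  have hanti : Antitone W := by
    apply antitone_of_deriv_nonpos
    · intro t; exact (hWderiv t).differentiableAt
    · intro t
      rw [(hWderiv t).deriv]
      have := sq_nonneg (x t); have := sq_nonneg (y t)
      nlinarith
  set M := max kx2 ky2 with hM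
  set m := min kx2 ky2 with hm
  have hMpos : 0 < M := lt_max_of_lt_left hkx2
  have hmpos : 0 < m := lt_min hkx2 hky2
  have key : ∀ t : ℝ, 0 ≤ t → (vx t)^2 + (vy t)^2 ≤ M / m * Vmax^2 := by
    intro t ht
    have hWt : W t ≤ W 0 := hanti ht
    have hW0 : W 0 = Vx^2 / kx2 + Vy^2 / ky2 := by
      simp [hW, hx0, hy0, hvx0, hvy0]
    have hW0le : W 0 ≤ (Vx^2 + Vy^2) / m := by
      rw [hW0]
      have h1 : Vx^2 / kx2 ≤ Vx^2 / m :=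
        div_le_div_of_nonneg_left (sq_nonneg _) hmpos (min_le_left _ _)
      have h2 : Vy^2 / ky2 ≤ Vy^2 / m :=
        div_le_div_of_nonneg_left (sq_nonneg _) hmpos (min_le_right _ _)
      rw [add_div]; linarith
    have hlow : ((vx t)^2 + (vy t)^2) / M ≤ W t := by
      have h1 : (vx t)^2 / M ≤ (vx t)^2 / kx2 :=
        div_le_div_of_nonneg_left (sq_nonneg _) hkx2 (le_max_left _ _)
      have h2 : (vy t)^2 / M ≤ (vy t)^2 / ky2 :=
        div_le_div_of_nonneg_left (sq_nonneg _) hky2 (le_max_right _ _)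
      have := sq_nonneg (x t); have := sq_nonneg (y t)
      rw [add_div]
      simp only [hW]
      linarith
    have : ((vx t)^2 + (vy t)^2) / M ≤ Vmax^2 / m := by
      calc ((vx t)^2 + (vy t)^2) / M ≤ W t := hlow
        _ ≤ W 0 := hWt
        _ ≤ (Vx^2 + Vy^2) / m := hW0le
        _ ≤ Vmax^2 / m := by gcongr
    calc (vx t)^2 + (vy t)^2 = ((vx t)^2 + (vy t)^2) / M * M := by field_simp
      _ ≤ Vmax^2 / m * M := by exact mul_le_mul_of_nonneg_right this hMpos.le
      _ = M / m * Vmax^2 := by ring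
  constructor
  · intro t ht
    have := key t ht
    calc Real.sqrt ((vx t)^2 + (vy t)^2) ≤ Real.sqrt (M / m * Vmax^2) :=
          Real.sqrt_le_sqrt this
      _ = Real.sqrt (M / m) * Vmax := by
          rw [Real.sqrt_mul (by positivity), Real.sqrt_sq hVmax]
  · intro heq t ht
    have := key t ht
    have hMm : M / m = 1 := by
      rw [hM, hm, heq, max_self, min_self, div_self hky2.ne']
    rw [hMm, one_mul] at this
    calc Real.sqrt ((vx t)^2 + (vy t)^2) ≤ Real.sqrt (Vmax^2) := Real.sqrt_le_sqrt this
      _ = Vmax := Real.sqrt_sq hVmax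
end

section
/- Let u, V̂_N, Δ, y be real numbers with u > 0, Δ > 0, and u² - V̂_N² > 0. Set a = -(u² - V̂_N²), b = y V̂_N, c = Δ² + y². Then b² - a c ≥ 0 and the number g = V̂_N · (b + √(b² - ac))/(-a) satisfies u · g / √(Δ² + (y + g)²) = V̂_N. Moreover g has the same sign as V̂_N (g = 0 iff V̂_N = 0, g > 0 if V̂_N > 0, g < 0 if V̂_N < 0). -/
open Real

/-- The guidance offset g exactly compensates the normal current component and
has the same sign as V̂_N. -/
theorem stmt_6 (u VN Δ y : ℝ) (hu : 0 < u) (hΔ : 0 < Δ) (hV : VN^2 < u^2) :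
    let a : ℝ := -(u^2 - VN^2)
    let b : ℝ := y * VN
    let c : ℝ := Δ^2 + y^2
    let g : ℝ := VN * ((b + Real.sqrt (b^2 - a*c)) / (-a))
    0 ≤ b^2 - a*c ∧
    u * g / Real.sqrt (Δ^2 + (y + g)^2) = VN ∧
    (g = 0 ↔ VN = 0) ∧ (0 < VN → 0 < g) ∧ (VN < 0 → g < 0) := by
  intro a b c g
  have hA : 0 < u ^ 2 - VN ^ 2 := by linarith
  have ha : a = -(u ^ 2 - VN ^ 2) := rfl
  have hb : b = y * VN := rfl
  have hc : c = Δ ^ 2 + y ^ 2 := rfl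
  have hcpos : 0 < c := by rw [hc]; positivity
  have hnn : 0 ≤ b ^ 2 - a * c := by
    rw [ha]; nlinarith [sq_nonneg b, mul_pos hA hcpos]
  set s := Real.sqrt (b ^ 2 - a * c) with hsdef
  have hs2 : s ^ 2 = b ^ 2 + (u ^ 2 - VN ^ 2) * c := by
    rw [hsdef, Real.sq_sqrt hnn, ha]; ring
  have hs0 : 0 ≤ s := Real.sqrt_nonneg _
  have hbs : 0 < b + s := by nlinarith [mul_pos hA hcpos]
  have hg : g = VN * ((b + s) / (u ^ 2 - VN ^ 2)) := by
    show VN * ((b + s) / (-a)) = _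
    rw [ha, neg_neg]
  set t := (b + s) / (u ^ 2 - VN ^ 2) with htdef
  have htpos : 0 < t := div_pos hbs hA
  have hAt : (u ^ 2 - VN ^ 2) * t = b + s := by
    rw [htdef]; field_simp
  have hquad : (u ^ 2 - VN ^ 2) * t ^ 2 = 2 * b * t + c := by
    have h2 : ((u ^ 2 - VN ^ 2) * t) ^ 2 = (b + s) ^ 2 := by rw [hAt]
    have h3 : (u ^ 2 - VN ^ 2) * ((u ^ 2 - VN ^ 2) * t ^ 2)
        = (u ^ 2 - VN ^ 2) * (2 * b * t + c) := by
      linear_combination h2 + hs2 - 2 * b * hAt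
    exact mul_left_cancel₀ (ne_of_gt hA) h3
  have hkey : Δ ^ 2 + (y + g) ^ 2 = (u * t) ^ 2 := by
    rw [hg]
    linear_combination -hquad - 2 * t * hb - hc
  have hut : 0 < u * t := mul_pos hu htpos
  have hsqrt : Real.sqrt (Δ ^ 2 + (y + g) ^ 2) = u * t := by
    rw [hkey, Real.sqrt_sq hut.le]
  refine ⟨hnn, ?_, ?_, ?_, ?_⟩
  · rw [hsqrt, hg]
    field_simp
  · rw [hg]
    constructor
    · intro h
      rcases mul_eq_zero.mp h with h | h
      · exact h
      · exact absurd h (by positivity)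
    · intro h; rw [h]; ring
  · intro h; rw [hg]; positivity
  · intro h; rw [hg]
    exact mul_neg_of_neg_of_pos h htpos
end

section
/- Consider the system ψ̃̇ = C(t) r̃, r̃̇ = -k₁ r̃ - k₂ C(t) ψ̃ where k₁, k₂ > 0 and C : ℝ≥0 → ℝ is continuously differentiable with 0 < c₁ ≤ C(t) ≤ c₂ and |Ċ(t)| bounded. Then the origin (ψ̃, r̃) = (0,0) is globally asymptotically stable; moreover with V = ½ r̃² + ½ k₂ ψ̃², V̇ = -k₁ r̃² ≤ 0 along solutions and every solution satisfies r̃(t) → 0 and ψ̃(t) → 0 as t → ∞. -/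
open Real Filter Topology

open Set


lemma lipOn {f f' : ℝ → ℝ} (hf : ∀ t : ℝ, HasDerivAt f (f' t) t)
    {M : ℝ} (hM : ∀ t : ℝ, 0 ≤ t → |f' t| ≤ M) :
    ∀ s : ℝ, 0 ≤ s → ∀ u : ℝ, 0 ≤ u → |f s - f u| ≤ M * |s - u| := by
  intro s hs u hu
  have := Convex.norm_image_sub_le_of_norm_hasDerivWithin_le
    (f := f) (f' := f') (s := Ici (0:ℝ)) (C := M)
    (fun x hx => (hf x).hasDerivWithinAt) (fun x hx => by simpa using hM x hx)
    (convex_Ici 0) hu hs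
  simpa [Real.norm_eq_abs] using this

lemma slope_lb {f f' : ℝ → ℝ} (hf : ∀ t : ℝ, HasDerivAt f (f' t) t)
    {M ε t : ℝ} (hM : 0 < M) (hε : 0 < ε) (ht : 0 ≤ t)
    (hlip : ∀ s : ℝ, 0 ≤ s → ∀ u : ℝ, 0 ≤ u → |f' s - f' u| ≤ M * |s - u|)
    (hft : ε ≤ f' t) :
    ε^2/(4*M) ≤ f (t + ε/(2*M)) - f t := by
  set δ := ε/(2*M) with hδdef
  have hδ : 0 < δ := by positivity
  obtain ⟨c, hc, hceq⟩ := exists_hasDerivAt_eq_slope f f' (by linarith : t < t + δ)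
    (fun x _ => (hf x).continuousAt.continuousWithinAt) (fun x _ => hf x)
  have hc0 : 0 ≤ c := by linarith [hc.1]
  have hcl : |f' c - f' t| ≤ M * δ := by
    have h1 := hlip c hc0 t ht
    have hct : |c - t| ≤ δ := by
      rw [abs_of_nonneg (by linarith [hc.1])]
      linarith [hc.2]
    calc |f' c - f' t| ≤ M * |c - t| := h1
      _ ≤ M * δ := by nlinarith
  have hMδ : M * δ = ε/2 := by rw [hδdef]; field_simp
  have hfc : ε/2 ≤ f' c := by
    have h2 := (abs_le.mp hcl).1
    rw [hMδ] at hcl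
    have h3 := (abs_le.mp hcl).1
    linarith
  have hslope : f' c * δ = f (t+δ) - f t := by
    rw [hceq]
    have : t + δ - t = δ := by ring
    rw [this]
    field_simp
  have hfin : ε/2 * δ ≤ f (t+δ) - f t := by
    rw [← hslope]
    nlinarith
  calc ε^2/(4*M) = ε/2 * δ := by rw [hδdef]; field_simp; ring
    _ ≤ _ := hfin

lemma barbalat {f f' f'' : ℝ → ℝ} (hf : ∀ t : ℝ, HasDerivAt f (f' t) t)
    (hf' : ∀ t : ℝ, HasDerivAt f' (f'' t) t) {M : ℝ}
    (hM : ∀ t : ℝ, 0 ≤ t → |f'' t| ≤ M)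
    {L : ℝ} (hL : Tendsto f atTop (𝓝 L)) : Tendsto f' atTop (𝓝 0) := by
  set M' := max M 1 with hM'def
  have hM'pos : (0:ℝ) < M' := lt_of_lt_of_le one_pos (le_max_right _ _)
  have hM'b : ∀ t : ℝ, 0 ≤ t → |f'' t| ≤ M' := fun t ht => (hM t ht).trans (le_max_left _ _)
  have hlip := lipOn hf' hM'b
  rw [Metric.tendsto_atTop]
  intro ε hε
  obtain ⟨T, hT⟩ := Metric.tendsto_atTop.mp hL (ε^2/(8*M')) (by positivity)
  refine ⟨max T 0, fun t ht => ?_⟩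
  have ht0 : 0 ≤ t := le_trans (le_max_right T 0) ht
  have htT : T ≤ t := le_trans (le_max_left T 0) ht
  rw [Real.dist_eq, sub_zero]
  by_contra hcon
  push_neg at hcon
  set δ := ε/(2*M') with hδdef
  have hδ : 0 < δ := by positivity
  have h1 := hT t htT
  have h2 := hT (t+δ) (by linarith)
  rw [Real.dist_eq] at h1 h2
  have h3 : |f (t+δ) - f t| < ε^2/(4*M') := by
    have htri : |f (t+δ) - f t| ≤ |f (t+δ) - L| + |f t - L| := by
      have := abs_sub (f (t+δ) - L) (f t - L)
      simpa using this
    have hhalf : ε^2/(8*M') + ε^2/(8*M') = ε^2/(4*M') := by ring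
    linarith
  rcases le_abs.mp hcon with hpos | hneg
  · have hkey := slope_lb hf hM'pos hε ht0 hlip hpos
    have := le_abs_self (f (t+δ) - f t)
    rw [← hδdef] at hkey
    linarith
  · have hg : ∀ s : ℝ, HasDerivAt (fun x => -f x) (-f' s) s := fun s => (hf s).neg
    have hglip : ∀ s : ℝ, 0 ≤ s → ∀ u : ℝ, 0 ≤ u → |(-f' s) - (-f' u)| ≤ M' * |s - u| := by
      intro s hs u hu
      rw [show -f' s - -f' u = -(f' s - f' u) by ring, abs_neg]
      exact hlip s hs u hu
    have hkey := slope_lb hg hM'pos hε ht0 hglip hneg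
    rw [← hδdef] at hkey
    have := neg_abs_le (f (t+δ) - f t)

    linarith

lemma abs_bd {a b A B : ℝ} (ha : |a| ≤ A) (hb : |b| ≤ B) : |a*b| ≤ A*B := by
  rw [abs_mul]
  exact mul_le_mul ha hb (abs_nonneg _) ((abs_nonneg a).trans ha)

/-- Global asymptotic stability of the yaw-angle/yaw-rate error dynamics with a
gain C(t) bounded above and away from zero. -/
theorem stmt_10 (k₁ k₂ c₁ c₂ : ℝ) (hk₁ : 0 < k₁) (hk₂ : 0 < k₂)
    (C C' : ℝ → ℝ) (hC : ∀ t : ℝ, HasDerivAt C (C' t) t)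
    (hc₁ : 0 < c₁) (hbl : ∀ t : ℝ, c₁ ≤ C t) (hbu : ∀ t : ℝ, C t ≤ c₂)
    (hC' : ∃ M : ℝ, ∀ t : ℝ, |C' t| ≤ M)
    (ψ r : ℝ → ℝ)
    (hψ : ∀ t : ℝ, HasDerivAt ψ (C t * r t) t)
    (hr : ∀ t : ℝ, HasDerivAt r (-k₁ * r t - k₂ * C t * ψ t) t) :
    (∀ t : ℝ, HasDerivAt (fun s => (1/2) * (r s)^2 + (1/2) * k₂ * (ψ s)^2)
        (-k₁ * (r t)^2) t) ∧
    Tendsto r atTop (𝓝 0) ∧ Tendsto ψ atTop (𝓝 0) := by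
  obtain ⟨M₀, hM₀⟩ := hC'
  set V : ℝ → ℝ := fun s => (1/2) * (r s)^2 + (1/2) * k₂ * (ψ s)^2 with hVdef
  clear_value V
  have hV : ∀ t : ℝ, HasDerivAt V (-k₁ * (r t)^2) t := by
    intro t
    rw [hVdef]
    have h1 := ((hr t).pow 2).const_mul (1/2 : ℝ)
    have h2 := ((hψ t).pow 2).const_mul ((1/2) * k₂)
    have h := h1.add h2
    exact h.congr_deriv (by norm_num; ring)
  -- C bounds
  have hCb : ∀ t : ℝ, |C t| ≤ c₂ := fun t => abs_le.mpr ⟨by linarith [hbl t, hbu t], hbu t⟩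
  -- V antitone on [0,∞)
  have hVdiff : Differentiable ℝ V := fun t => (hV t).differentiableAt
  have hVanti : AntitoneOn V (Ici (0:ℝ)) := by
    apply antitoneOn_of_deriv_nonpos (convex_Ici 0) hVdiff.continuous.continuousOn
      (hVdiff.differentiableOn)
    intro x hx
    rw [(hV x).deriv]
    nlinarith [sq_nonneg (r x)]
  have hVnn : ∀ t : ℝ, 0 ≤ V t := by
    intro t
    rw [hVdef]
    nlinarith [sq_nonneg (r t), sq_nonneg (ψ t)]
  have hVle : ∀ t : ℝ, 0 ≤ t → V t ≤ V 0 := fun t ht =>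
    hVanti self_mem_Ici ht ht
  -- bounds on r and ψ for t ≥ 0
  set R := Real.sqrt (2 * V 0) with hRdef
  set P := Real.sqrt (2 * V 0 / k₂) with hPdef
  have hrb : ∀ t : ℝ, 0 ≤ t → |r t| ≤ R := by
    intro t ht
    rw [← Real.sqrt_sq_eq_abs]
    apply Real.sqrt_le_sqrt
    have h1 := hVle t ht
    have h2 : V t = 1/2 * r t ^ 2 + 1/2 * k₂ * ψ t ^ 2 := by rw [hVdef]
    nlinarith [mul_nonneg hk₂.le (sq_nonneg (ψ t))]
  have hψb : ∀ t : ℝ, 0 ≤ t → |ψ t| ≤ P := by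
    intro t ht
    rw [← Real.sqrt_sq_eq_abs]
    apply Real.sqrt_le_sqrt
    have h1 := hVle t ht
    have h2 : V t = 1/2 * r t ^ 2 + 1/2 * k₂ * ψ t ^ 2 := by rw [hVdef]
    rw [le_div_iff₀ hk₂]
    nlinarith [sq_nonneg (r t)]

  have hRnn : 0 ≤ R := Real.sqrt_nonneg _
  have hPnn : 0 ≤ P := Real.sqrt_nonneg _
  have hM₀nn : 0 ≤ M₀ := (abs_nonneg _).trans (hM₀ 0)
  -- V converges
  have hW : Tendsto (fun t => V (max t 0)) atTop (𝓝 (⨅ t : ℝ, V (max t 0))) := by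
    apply tendsto_atTop_ciInf
    · intro s t hst
      exact hVanti (le_max_right s 0) (le_max_right t 0) (max_le_max hst le_rfl)
    · exact ⟨0, fun x ⟨t, ht⟩ => ht ▸ hVnn _⟩
  have hVten : Tendsto V atTop (𝓝 (⨅ t : ℝ, V (max t 0))) := by
    apply hW.congr'
    filter_upwards [eventually_ge_atTop (0:ℝ)] with t ht
    rw [max_eq_left ht]
  -- second derivative of V and its bound
  have hk₁' : |(-k₁ : ℝ)| ≤ k₁ := by rw [abs_neg, abs_of_pos hk₁]
  have h2' : |(2:ℝ)| ≤ 2 := by norm_num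
  have hXb : ∀ t : ℝ, 0 ≤ t → |-k₁ * r t - k₂ * C t * ψ t| ≤ k₁ * R + k₂ * c₂ * P := by
    intro t ht
    calc |-k₁ * r t - k₂ * C t * ψ t| ≤ |-k₁ * r t| + |k₂ * C t * ψ t| := abs_sub _ _
      _ ≤ k₁ * R + k₂ * c₂ * P := by
          gcongr
          · exact abs_bd hk₁' (hrb t ht)
          · exact abs_bd (abs_bd (by rw [abs_of_pos hk₂]) (hCb t)) (hψb t ht)
  have hV'' : ∀ t : ℝ, HasDerivAt (fun s => -k₁ * (r s)^2)
      (-k₁ * (2 * r t ^ 1 * (-k₁ * r t - k₂ * C t * ψ t))) t := by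
    intro t
    exact ((hr t).pow 2).const_mul (-k₁)
  have hV''b : ∀ t : ℝ, 0 ≤ t →
      |-k₁ * (2 * r t ^ 1 * (-k₁ * r t - k₂ * C t * ψ t))| ≤ k₁ * (2 * R * (k₁ * R + k₂ * c₂ * P)) := by
    intro t ht
    exact abs_bd hk₁' (abs_bd (abs_bd h2' (by rw [pow_one]; exact hrb t ht)) (hXb t ht))
  -- Barbalat 1 : V' → 0
  have hB1 : Tendsto (fun t => -k₁ * (r t)^2) atTop (𝓝 0) :=
    barbalat hV hV'' hV''b hVten
  -- r² → 0
  have hr2 : Tendsto (fun t => (r t)^2) atTop (𝓝 0) := by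
    have h := hB1.const_mul (-(1/k₁))
    rw [mul_zero] at h
    apply h.congr
    intro t
    field_simp
  -- |r| → 0
  have habsr : Tendsto (fun t => |r t|) atTop (𝓝 0) := by
    have h := (Real.continuous_sqrt.tendsto 0).comp hr2
    rw [Real.sqrt_zero] at h
    apply h.congr
    intro t
    simp [Function.comp, Real.sqrt_sq_eq_abs]
  -- r → 0
  have hrten : Tendsto r atTop (𝓝 0) := by
    have hneg : Tendsto (fun t => -|r t|) atTop (𝓝 0) := by simpa using habsr.neg
    exact tendsto_of_tendsto_of_tendsto_of_le_of_le hneg habsr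
      (fun t => neg_abs_le _) (fun t => le_abs_self _)
  -- second derivative of r and its bound
  have hr'' : ∀ t : ℝ, HasDerivAt (fun s => -k₁ * r s - k₂ * C s * ψ s)
      (-k₁ * (-k₁ * r t - k₂ * C t * ψ t) - (k₂ * C' t * ψ t + k₂ * C t * (C t * r t))) t := by
    intro t
    exact ((hr t).const_mul (-k₁)).sub (((hC t).const_mul k₂).mul (hψ t))
  have hr''b : ∀ t : ℝ, 0 ≤ t →
      |-k₁ * (-k₁ * r t - k₂ * C t * ψ t) - (k₂ * C' t * ψ t + k₂ * C t * (C t * r t))|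
        ≤ k₁ * (k₁ * R + k₂ * c₂ * P) + (k₂ * M₀ * P + k₂ * c₂ * (c₂ * R)) := by
    intro t ht
    calc |-k₁ * (-k₁ * r t - k₂ * C t * ψ t) - (k₂ * C' t * ψ t + k₂ * C t * (C t * r t))|
        ≤ |-k₁ * (-k₁ * r t - k₂ * C t * ψ t)| + |k₂ * C' t * ψ t + k₂ * C t * (C t * r t)| :=
          abs_sub _ _
      _ ≤ |-k₁ * (-k₁ * r t - k₂ * C t * ψ t)| + (|k₂ * C' t * ψ t| + |k₂ * C t * (C t * r t)|) := by
          gcongr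
          exact abs_add_le _ _
      _ ≤ k₁ * (k₁ * R + k₂ * c₂ * P) + (k₂ * M₀ * P + k₂ * c₂ * (c₂ * R)) := by
          gcongr
          · exact abs_bd hk₁' (hXb t ht)
          · exact abs_bd (abs_bd (by rw [abs_of_pos hk₂]) (hM₀ t)) (hψb t ht)
          · exact abs_bd (abs_bd (by rw [abs_of_pos hk₂]) (hCb t)) (abs_bd (hCb t) (hrb t ht))
  -- Barbalat 2 : r' → 0
  have hB2 : Tendsto (fun t => -k₁ * r t - k₂ * C t * ψ t) atTop (𝓝 0) :=
    barbalat hr hr'' hr''b hrten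
  -- C ψ → 0
  have hCψ : Tendsto (fun t => C t * ψ t) atTop (𝓝 0) := by
    have h1 : Tendsto (fun t => -k₁ * r t) atTop (𝓝 0) := by
      simpa using hrten.const_mul (-k₁)
    have h2 : Tendsto (fun t => (-k₁ * r t - k₂ * C t * ψ t) - (-k₁ * r t)) atTop (𝓝 0) := by
      simpa using hB2.sub h1
    have h3 := h2.const_mul (-(1/k₂))
    rw [mul_zero] at h3
    apply h3.congr
    intro t
    field_simp
    ring
  -- ψ → 0 by squeeze
  have habsCψ : Tendsto (fun t => |C t * ψ t| / c₁) atTop (𝓝 0) := by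
    have h := (continuous_abs.tendsto 0).comp hCψ
    rw [abs_zero] at h
    have h2 := h.div_const c₁
    rw [zero_div] at h2
    exact h2
  have hψbd : ∀ t : ℝ, |ψ t| ≤ |C t * ψ t| / c₁ := by
    intro t
    rw [le_div_iff₀ hc₁, abs_mul]
    calc |ψ t| * c₁ = c₁ * |ψ t| := by ring
      _ ≤ |C t| * |ψ t| := by
          gcongr
          exact (hbl t).trans (le_abs_self _)
  have hψten : Tendsto ψ atTop (𝓝 0) := by
    have hneg : Tendsto (fun t => -(|C t * ψ t| / c₁)) atTop (𝓝 0) := by simpa using habsCψ.neg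
    exact tendsto_of_tendsto_of_tendsto_of_le_of_le hneg habsCψ
      (fun t => by have := hψbd t; have := neg_abs_le (ψ t); linarith [neg_le_neg (hψbd t), neg_abs_le (ψ t)])
      (fun t => (le_abs_self _).trans (hψbd t))
  exact ⟨hVdef ▸ hV, hrten, hψten⟩
end

section
/- Suppose C : ℝ≥0 → ℝ satisfies 0 < c₁ ≤ C(t) ≤ c₂ for all t, and (ψ̃, r̃) solves ψ̃̇ = C(t) r̃, r̃̇ = -k₁ r̃ - k₂ C(t) ψ̃ with k₁, k₂ > 0. If r̃(t) → 0 and r̃̇(t) → 0 as t → ∞ (the latter following from uniform continuity of r̃̇ and Barbalat), then ψ̃(t) → 0 as t → ∞. -/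
open Real Filter Topology

/-- If r̃ and r̃̇ converge to zero along the yaw error dynamics with gain C(t)
bounded away from zero, then ψ̃ converges to zero as well. -/
theorem stmt_19 (k₁ k₂ c₁ c₂ : ℝ) (hk₁ : 0 < k₁) (hk₂ : 0 < k₂)
    (hc₁ : 0 < c₁)
    (C : ℝ → ℝ) (hbl : ∀ t : ℝ, 0 ≤ t → c₁ ≤ C t) (hbu : ∀ t : ℝ, 0 ≤ t → C t ≤ c₂)
    (ψ r : ℝ → ℝ)
    (hψ : ∀ t : ℝ, 0 ≤ t → HasDerivAt ψ (C t * r t) t)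
    (hr : ∀ t : ℝ, 0 ≤ t → HasDerivAt r (-k₁ * r t - k₂ * C t * ψ t) t)
    (hrlim : Tendsto r atTop (𝓝 0))
    (hr'lim : Tendsto (fun t => -k₁ * r t - k₂ * C t * ψ t) atTop (𝓝 0)) :
    Tendsto ψ atTop (𝓝 0) := by
  have h1 : Tendsto (fun t => k₂ * C t * ψ t) atTop (𝓝 0) := by
    have h := (hrlim.const_mul (-k₁)).sub hr'lim
    simp only [mul_zero, sub_zero] at h
    convert h using 2 with t
    ring
  have h2 : Tendsto (fun t => |k₂ * C t * ψ t| / (k₂ * c₁)) atTop (𝓝 0) := by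
    have := (h1.abs).div_const (k₂ * c₁)
    simpa using this
  have hposc : 0 < k₂ * c₁ := mul_pos hk₂ hc₁
  apply squeeze_zero_norm' _ h2
  filter_upwards [eventually_ge_atTop (0 : ℝ)] with t ht
  have hC := hbl t ht
  have hCpos : 0 < C t := lt_of_lt_of_le hc₁ hC
  rw [abs_mul, abs_mul, abs_of_pos hk₂, abs_of_pos hCpos]
  rw [le_div_iff₀ hposc]
  have : k₂ * c₁ * ‖ψ t‖ ≤ k₂ * C t * ‖ψ t‖ := by
    apply mul_le_mul_of_nonneg_right _ (norm_nonneg _)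
    exact mul_le_mul_of_nonneg_left hC hk₂.le
  calc ‖ψ t‖ * (k₂ * c₁) = k₂ * c₁ * ‖ψ t‖ := by ring
    _ ≤ k₂ * C t * ‖ψ t‖ := this
    _ = k₂ * C t * |ψ t| := rfl
end
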